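/- Let A be the (m-1)×(m-1) upper triangular matrix with entries A_{i,i} = 1, A_{i,i+1} = -2, A_{i,i+3} = 1 (for indices within range), and 0 otherwise. Then A is invertible and the entries of A^{-1} satisfy (A^{-1})_{i,j} = F_{j-i+2} - 1 for j ≥ i and 0 for j < i, where F_1 = 1, F_2 = 2 is the shifted Fibonacci sequence. -/

import Mathlib

private def gmb (i j : ℕ) : ℚ := if i ≤ j then (Nat.fib (j - i + 3) : ℚ) - 1 else 0

private lemma gmb_key (i j : ℕ) :
    gmb i j - 2 * gmb (i+1) j + gmb (i+3) j = if i = j then 1 else 0 := by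
  unfold gmb
  rcases Nat.lt_or_ge j i with h | h
  · rw [if_neg (by omega), if_neg (by omega), if_neg (by omega), if_neg (by omega)]
    ring
  · obtain ⟨d, rfl⟩ : ∃ d, j = i + d := ⟨j - i, by omega⟩
    match d with
    | 0 =>
      rw [if_pos (by omega), if_neg (by omega), if_neg (by omega), if_pos (by omega)]
      norm_num [show i + 0 - i + 3 = 3 from by omega, show Nat.fib 3 = 2 from rfl]
    | 1 =>
      rw [if_pos (by omega), if_pos (by omega), if_neg (by omega), if_neg (by omega)]
      rw [show i + 1 - i + 3 = 4 from by omega, show i + 1 - (i+1) + 3 = 3 from by omega]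
      norm_num [show Nat.fib 4 = 3 from rfl, show Nat.fib 3 = 2 from rfl]
    | 2 =>
      rw [if_pos (by omega), if_pos (by omega), if_neg (by omega), if_neg (by omega)]
      rw [show i + 2 - i + 3 = 5 from by omega, show i + 2 - (i+1) + 3 = 4 from by omega]
      norm_num [show Nat.fib 5 = 5 from rfl, show Nat.fib 4 = 3 from rfl]
    | (e+3) =>
      rw [if_pos (by omega), if_pos (by omega), if_pos (by omega), if_neg (by omega)]
      rw [show i + (e+3) - i + 3 = (e+4) + 2 from by omega,
        show i + (e+3) - (i+1) + 3 = (e+3) + 2 from by omega,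
        show i + (e+3) - (i+3) + 3 = e + 3 from by omega]
      rw [Nat.fib_add_two (n := e+4), Nat.fib_add_two (n := e+3)]
      push_cast
      ring

/-- The (m-1)×(m-1) matrix with 1 on the diagonal, -2 on the first superdiagonal and
    1 on the third superdiagonal is invertible, and its inverse has entries
    F_{j-i+2} - 1 above (and on) the diagonal and 0 below, where F_i = fib (i+1). -/
theorem inverse_of_game_matrix (m : ℕ) (hm : 2 ≤ m)
    (A : Matrix (Fin (m - 1)) (Fin (m - 1)) ℚ)
    (hA : ∀ i j : Fin (m - 1),
      A i j = if j.1 = i.1 then 1 else if j.1 = i.1 + 1 then -2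
        else if j.1 = i.1 + 3 then 1 else 0) :
    IsUnit A ∧ ∀ i j : Fin (m - 1),
      A⁻¹ i j = if i.1 ≤ j.1 then (Nat.fib (j.1 - i.1 + 3) : ℚ) - 1 else 0 := by
  set B : Matrix (Fin (m-1)) (Fin (m-1)) ℚ := Matrix.of fun i j => gmb i.1 j.1 with hB
  have hAB : A * B = 1 := by
    ext i j
    rw [Matrix.mul_apply, Matrix.one_apply]
    have step : ∀ k : Fin (m-1), A i k * B k j =
        (if (k:ℕ) = i.1 then gmb k.1 j.1 else 0) +
        (if (k:ℕ) = i.1 + 1 then -2 * gmb k.1 j.1 else 0) +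
        (if (k:ℕ) = i.1 + 3 then gmb k.1 j.1 else 0) := by
      intro k
      rw [hA, hB]
      simp only [Matrix.of_apply]
      split_ifs <;> first | (exfalso; omega) | ring
    rw [Finset.sum_congr rfl (fun k _ => step k)]
    rw [Finset.sum_add_distrib, Finset.sum_add_distrib]
    rw [Fin.sum_univ_eq_sum_range (fun k => if k = i.1 then gmb k j.1 else 0),
      Fin.sum_univ_eq_sum_range (fun k => if k = i.1 + 1 then -2 * gmb k j.1 else 0),
      Fin.sum_univ_eq_sum_range (fun k => if k = i.1 + 3 then gmb k j.1 else 0)]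
    rw [Finset.sum_ite_eq' (Finset.range (m-1)) i.1 (fun k => gmb k j.1),
      Finset.sum_ite_eq' (Finset.range (m-1)) (i.1+1) (fun k => -2 * gmb k j.1),
      Finset.sum_ite_eq' (Finset.range (m-1)) (i.1+3) (fun k => gmb k j.1)]
    have h1 : (if i.1 ∈ Finset.range (m-1) then gmb i.1 j.1 else 0) = gmb i.1 j.1 := by
      rw [if_pos (Finset.mem_range.mpr i.isLt)]
    have h2 : (if i.1 + 1 ∈ Finset.range (m-1) then -2 * gmb (i.1+1) j.1 else 0)
        = -2 * gmb (i.1+1) j.1 := by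
      split_ifs with h
      · rfl
      · rw [Finset.mem_range] at h
        unfold gmb
        rw [if_neg (by have := j.isLt; omega)]
        ring
    have h3 : (if i.1 + 3 ∈ Finset.range (m-1) then gmb (i.1+3) j.1 else 0)
        = gmb (i.1+3) j.1 := by
      split_ifs with h
      · rfl
      · rw [Finset.mem_range] at h
        unfold gmb
        rw [if_neg (by have := j.isLt; omega)]
    rw [h1, h2, h3]
    have := gmb_key i.1 j.1
    rw [show gmb i.1 j.1 + -2 * gmb (i.1+1) j.1 + gmb (i.1+3) j.1
        = gmb i.1 j.1 - 2 * gmb (i.1+1) j.1 + gmb (i.1+3) j.1 from by ring, this]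
    simp [Fin.ext_iff]
  have hinv : A⁻¹ = B := Matrix.inv_eq_right_inv hAB
  refine ⟨?_, ?_⟩
  · exact (Matrix.isUnit_iff_isUnit_det A).mpr (Matrix.isUnit_det_of_right_inverse hAB)
  · intro i j
    rw [hinv]
    simp only [hB, Matrix.of_apply, gmb]
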